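/- Let z_1, …, z_N be pairwise distinct complex numbers. Then each quadratic Gaudin Hamiltonian commutes with the diagonal action of 𝔤: for every x ∈ 𝔤 and every 1 ≤ i ≤ N, one has Δ(x) ∘ H_i = H_i ∘ Δ(x), where Δ(x) = Σ_{j=1}^{N} x^{(j)} is the diagonal action of x on V_1 ⊗ ⋯ ⊗ V_N. -/

import Mathlib

open scoped TensorProduct

noncomputable section

variable {𝔤 : Type*} [LieRing 𝔤] [LieAlgebra ℂ 𝔤]
variable {N : ℕ} (V : Fin N → Type*) [∀ i, AddCommGroup (V i)] [∀ i, Module ℂ (V i)]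
  [∀ i, LieRingModule 𝔤 (V i)] [∀ i, LieModule ℂ 𝔤 (V i)]

/-- The endomorphism `x^{(i)}` of `V 1 ⊗ ⋯ ⊗ V N` acting as `x` in the `i`-th tensor
factor and as the identity in the other factors. -/
def opAt (i : Fin N) (x : 𝔤) : Module.End ℂ (⨂[ℂ] j, V j) :=
  PiTensorProduct.map
    (Function.update (fun j => (LinearMap.id : V j →ₗ[ℂ] V j)) i
      (LieModule.toEnd ℂ 𝔤 (V i) x))

/-- The diagonal action `Δ(x) = ∑_j x^{(j)}`. -/
def diagAct (x : 𝔤) : Module.End ℂ (⨂[ℂ] j, V j) :=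
  ∑ j, opAt V j x

/-- The quadratic Gaudin Hamiltonian
`H i = ∑_{k ≠ i} (z i - z k)⁻¹ ∑_a x_a^{(i)} ∘ x_a^{(k)}`. -/
def gaudinH {d : ℕ} (b : Fin d → 𝔤) (z : Fin N → ℂ) (i : Fin N) :
    Module.End ℂ (⨂[ℂ] j, V j) :=
  ∑ k ∈ Finset.univ.erase i, (z i - z k)⁻¹ •
    ∑ a, opAt V i (b a) * opAt V k (b a)

/-! ### Auxiliary lemmas -/

private lemma map_update_sub {ι : Type*} [DecidableEq ι] [Fintype ι]
    (s : ι → Type*) [∀ i, AddCommGroup (s i)] [∀ i, Module ℂ (s i)]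
    (f : ∀ i, s i →ₗ[ℂ] s i) (i : ι) (u v : s i →ₗ[ℂ] s i) :
    PiTensorProduct.map (Function.update f i (u - v)) =
      PiTensorProduct.map (Function.update f i u) -
        PiTensorProduct.map (Function.update f i v) := by
  rw [sub_eq_add_neg, PiTensorProduct.map_update_add, ← neg_one_smul ℂ v,
    PiTensorProduct.map_update_smul]
  module

lemma opAt_mul_opAt_of_ne {i k : Fin N} (h : i ≠ k) (x y : 𝔤) :
    opAt V i x * opAt V k y = opAt V k y * opAt V i x := by
  unfold opAt
  rw [Module.End.mul_eq_comp, Module.End.mul_eq_comp, ← PiTensorProduct.map_comp,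
    ← PiTensorProduct.map_comp]
  congr 1
  funext j
  rcases eq_or_ne j i with rfl | hi
  · rw [Function.update_self, Function.update_of_ne h]
    simp
  · rw [Function.update_of_ne hi]
    simp

/-- `opAt V i` as a linear map in the Lie algebra element. -/
def opAtL (i : Fin N) : 𝔤 →ₗ[ℂ] Module.End ℂ (⨂[ℂ] j, V j) where
  toFun x := opAt V i x
  map_add' x y := by
    unfold opAt
    rw [map_add, PiTensorProduct.map_update_add]
  map_smul' c x := by
    unfold opAt
    rw [map_smul, PiTensorProduct.map_update_smul, RingHom.id_apply]

@[simp] lemma opAtL_apply (i : Fin N) (x : 𝔤) : opAtL V i x = opAt V i x := rfl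

lemma opAt_mul_opAt_same (i : Fin N) (x y : 𝔤) :
    opAt V i x * opAt V i y =
      PiTensorProduct.map (Function.update (fun j => (LinearMap.id : V j →ₗ[ℂ] V j)) i
        (LieModule.toEnd ℂ 𝔤 (V i) x ∘ₗ LieModule.toEnd ℂ 𝔤 (V i) y)) := by
  unfold opAt
  rw [Module.End.mul_eq_comp, ← PiTensorProduct.map_comp]
  congr 1
  funext j
  rcases eq_or_ne j i with rfl | hi
  · simp
  · rw [Function.update_of_ne hi, Function.update_of_ne hi, Function.update_of_ne hi]
    simp

lemma opAt_lie (i : Fin N) (x y : 𝔤) :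
    opAt V i ⁅x, y⁆ = opAt V i x * opAt V i y - opAt V i y * opAt V i x := by
  rw [opAt_mul_opAt_same, opAt_mul_opAt_same]
  unfold opAt
  letI : LieRing (Module.End ℂ (V i)) := LieRing.ofAssociativeRing
  rw [LieHom.map_lie]
  rw [show ⁅LieModule.toEnd ℂ 𝔤 (V i) x, LieModule.toEnd ℂ 𝔤 (V i) y⁆ =
      LieModule.toEnd ℂ 𝔤 (V i) x ∘ₗ LieModule.toEnd ℂ 𝔤 (V i) y -
        LieModule.toEnd ℂ 𝔤 (V i) y ∘ₗ LieModule.toEnd ℂ 𝔤 (V i) x from rfl]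
  rw [map_update_sub]

lemma opAt_bracket (j i : Fin N) (x y : 𝔤) :
    opAt V j x * opAt V i y - opAt V i y * opAt V j x =
      if j = i then opAt V i ⁅x, y⁆ else 0 := by
  rcases eq_or_ne j i with rfl | h
  · rw [if_pos rfl, opAt_lie]
  · rw [if_neg h, opAt_mul_opAt_of_ne V h, sub_self]

/-- Commutator of the diagonal action with a product of operators at two distinct sites. -/
lemma diag_comm_pair {i k : Fin N} (h : i ≠ k) (x y w : 𝔤) :
    diagAct V x * (opAt V i y * opAt V k w) - (opAt V i y * opAt V k w) * diagAct V x =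
      opAt V i ⁅x, y⁆ * opAt V k w + opAt V i y * opAt V k ⁅x, w⁆ := by
  unfold diagAct
  rw [Finset.sum_mul, Finset.mul_sum, ← Finset.sum_sub_distrib]
  have key : ∀ j : Fin N,
      opAt V j x * (opAt V i y * opAt V k w) - opAt V i y * opAt V k w * opAt V j x =
        (if j = i then opAt V i ⁅x, y⁆ else 0) * opAt V k w +
          opAt V i y * (if j = k then opAt V k ⁅x, w⁆ else 0) := by
    intro j
    rw [← opAt_bracket, ← opAt_bracket]
    simp only [sub_mul, mul_sub, mul_assoc]
    abel
  rw [Finset.sum_congr rfl fun j _ => key j, Finset.sum_add_distrib]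
  congr 1
  · rw [← Finset.sum_mul, Finset.sum_ite_eq' Finset.univ i, if_pos (Finset.mem_univ i)]
  · rw [← Finset.mul_sum, Finset.sum_ite_eq' Finset.univ k, if_pos (Finset.mem_univ k)]

section basis

variable {d : ℕ} (b : Module.Basis (Fin d) ℂ 𝔤)

lemma repr_eq_killing [LieAlgebra.IsSemisimple ℂ 𝔤] [FiniteDimensional ℂ 𝔤]
    (horth : ∀ a a' : Fin d, killingForm ℂ 𝔤 (b a) (b a') = if a = a' then 1 else 0)
    (y : 𝔤) (c : Fin d) : b.repr y c = killingForm ℂ 𝔤 y (b c) := by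
  conv_rhs => rw [← b.sum_repr y]
  rw [map_sum, LinearMap.sum_apply]
  rw [Finset.sum_congr rfl fun a _ => by
    rw [map_smul, LinearMap.smul_apply, horth a c, smul_eq_mul]]
  simp [Finset.sum_ite_eq']

lemma opAt_expand [LieAlgebra.IsSemisimple ℂ 𝔤] [FiniteDimensional ℂ 𝔤]
    (horth : ∀ a a' : Fin d, killingForm ℂ 𝔤 (b a) (b a') = if a = a' then 1 else 0)
    (j : Fin N) (y : 𝔤) :
    opAt V j y = ∑ c, killingForm ℂ 𝔤 y (b c) • opAt V j (b c) := by
  conv_lhs => rw [← opAtL_apply, ← b.sum_repr y, map_sum]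
  refine Finset.sum_congr rfl fun c _ => ?_
  rw [map_smul, repr_eq_killing b horth, opAtL_apply]

/-- Invariance of the (split) Casimir element. -/
lemma casimir_invariance [LieAlgebra.IsSemisimple ℂ 𝔤] [FiniteDimensional ℂ 𝔤]
    (horth : ∀ a a' : Fin d, killingForm ℂ 𝔤 (b a) (b a') = if a = a' then 1 else 0)
    (i k : Fin N) (x : 𝔤) :
    ∑ a, (opAt V i ⁅x, b a⁆ * opAt V k (b a) + opAt V i (b a) * opAt V k ⁅x, b a⁆) = 0 := by
  have h1 : ∀ a, opAt V i ⁅x, b a⁆ * opAt V k (b a) =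
      ∑ c, killingForm ℂ 𝔤 ⁅x, b a⁆ (b c) • (opAt V i (b c) * opAt V k (b a)) := by
    intro a
    rw [opAt_expand V b horth i ⁅x, b a⁆, Finset.sum_mul]
    exact Finset.sum_congr rfl fun c _ => smul_mul_assoc _ _ _
  have h2 : ∀ a, opAt V i (b a) * opAt V k ⁅x, b a⁆ =
      ∑ c, killingForm ℂ 𝔤 ⁅x, b a⁆ (b c) • (opAt V i (b a) * opAt V k (b c)) := by
    intro a
    rw [opAt_expand V b horth k ⁅x, b a⁆, Finset.mul_sum]
    exact Finset.sum_congr rfl fun c _ => (mul_smul_comm _ _ _)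
  rw [Finset.sum_congr rfl fun a _ => by rw [h1 a, h2 a]]
  rw [Finset.sum_add_distrib]
  have swap : ∑ a, ∑ c, killingForm ℂ 𝔤 ⁅x, b a⁆ (b c) • (opAt V i (b a) * opAt V k (b c)) =
      ∑ a, ∑ c, killingForm ℂ 𝔤 ⁅x, b c⁆ (b a) • (opAt V i (b c) * opAt V k (b a)) :=
    Finset.sum_comm
  rw [swap, ← Finset.sum_add_distrib]
  refine Finset.sum_eq_zero fun a _ => ?_
  rw [← Finset.sum_add_distrib]
  refine Finset.sum_eq_zero fun c _ => ?_
  have hskew : killingForm ℂ 𝔤 ⁅x, b c⁆ (b a) = - killingForm ℂ 𝔤 ⁅x, b a⁆ (b c) := by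
    rw [LieModule.traceForm_apply_lie_apply', LieModule.traceForm_comm]
  rw [hskew]
  module

end basis

/-- each quadratic Gaudin Hamiltonian commutes with the diagonal
action of `𝔤`. -/
theorem gaudin_hamiltonian_commutes_with_diagonal
    [LieAlgebra.IsSemisimple ℂ 𝔤] [FiniteDimensional ℂ 𝔤]
    [∀ i, FiniteDimensional ℂ (V i)]
    (hN : 0 < N) {d : ℕ} (b : Module.Basis (Fin d) ℂ 𝔤)
    (horth : ∀ a a' : Fin d, killingForm ℂ 𝔤 (b a) (b a') = if a = a' then 1 else 0)
    (z : Fin N → ℂ) (hz : Function.Injective z) (x : 𝔤) (i : Fin N) :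
    diagAct V x * gaudinH V (⇑b) z i = gaudinH V (⇑b) z i * diagAct V x := by
  rw [← sub_eq_zero]
  unfold gaudinH
  rw [Finset.mul_sum, Finset.sum_mul, ← Finset.sum_sub_distrib]
  refine Finset.sum_eq_zero fun k hk => ?_
  have hik : i ≠ k := (Finset.ne_of_mem_erase hk).symm
  have hS : diagAct V x * (∑ a, opAt V i (b a) * opAt V k (b a)) =
      (∑ a, opAt V i (b a) * opAt V k (b a)) * diagAct V x := by
    rw [← sub_eq_zero, Finset.mul_sum, Finset.sum_mul, ← Finset.sum_sub_distrib]
    have : ∑ a, (diagAct V x * (opAt V i (b a) * opAt V k (b a)) -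
        opAt V i (b a) * opAt V k (b a) * diagAct V x) =
        ∑ a, (opAt V i ⁅x, b a⁆ * opAt V k (b a) + opAt V i (b a) * opAt V k ⁅x, b a⁆) :=
      Finset.sum_congr rfl fun a _ => diag_comm_pair V hik x (b a) (b a)
    rw [this, casimir_invariance V b horth i k x]
  rw [mul_smul_comm, smul_mul_assoc, hS, sub_self]
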